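/- In the monoid M presented by generators a, b and the single relation a*b*a = a, the idempotent elements are exactly 1, a*b, and b*a: an element x of M satisfies x*x = x if and only if x = 1 or x = a*b or x = b*a. Moreover the three elements 1, a*b, b*a of M are pairwise distinct. -/

import Mathlib

/-- The two generators `a` and `b`. -/
inductive Gen : Type
  | a : Gen
  | b : Gen

/-- The single relation `a*b*a = a`. -/
def abaRel : FreeMonoid Gen → FreeMonoid Gen → Prop := fun w₁ w₂ =>
  w₁ = FreeMonoid.of Gen.a * FreeMonoid.of Gen.b * FreeMonoid.of Gen.a ∧
  w₂ = FreeMonoid.of Gen.a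

/-- The monoid presented by generators `a, b` and the relation `a*b*a = a`. -/
abbrev M := PresentedMonoid abaRel

/-- The generator `a` of `M`. -/
def a : M := PresentedMonoid.of abaRel Gen.a

/-- The generator `b` of `M`. -/
def b : M := PresentedMonoid.of abaRel Gen.b

deriving instance DecidableEq for Gen

namespace Aba

def strip : List Gen → List Gen
  | Gen.b :: Gen.a :: t => strip t
  | l => l

def step : Gen → List Gen → List Gen
  | Gen.a, l => Gen.a :: strip l
  | Gen.b, l => Gen.b :: l

def norm (l : List Gen) : List Gen := l.foldr step []

example (t : List Gen) : strip (Gen.b :: Gen.a :: t) = strip t := by simp [strip]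

lemma strip_eq_self {l : List Gen} (h : ∀ t, l ≠ Gen.b :: Gen.a :: t) : strip l = l := by
  match l with
  | [] => rfl
  | [x] => cases x <;> rfl
  | Gen.b :: Gen.a :: t => exact absurd rfl (h t)
  | Gen.a :: y :: t => rfl
  | Gen.b :: Gen.b :: t => rfl

lemma strip_ba (t : List Gen) : strip (Gen.b :: Gen.a :: t) = strip t := by simp [strip]

lemma strip_ne_ba (l : List Gen) : ∀ t, strip l ≠ Gen.b :: Gen.a :: t := by
  induction l using strip.induct with
  | case1 t ih => rw [strip_ba]; exact ih
  | case2 l h => rw [strip_eq_self (fun t ht => h t ht)]; exact fun t ht => h t ht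

lemma strip_strip (l : List Gen) : strip (strip l) = strip l :=
  strip_eq_self (strip_ne_ba l)

lemma strip_length (l : List Gen) : (strip l).length ≤ l.length := by
  induction l using strip.induct with
  | case1 t ih => rw [strip_ba]; simp; omega
  | case2 l h => rw [strip_eq_self (fun t ht => h t ht)]

lemma strip_eq_of_length {l : List Gen} (h : (strip l).length = l.length) : strip l = l := by
  induction l using strip.induct with
  | case1 t ih =>
      exfalso
      rw [strip_ba] at h
      have := strip_length t
      simp at h
      omega
  | case2 l hl => exact strip_eq_self (fun t ht => hl t ht)

lemma step_a (l : List Gen) : step Gen.a l = Gen.a :: strip l := rfl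
lemma step_b (l : List Gen) : step Gen.b l = Gen.b :: l := rfl

lemma step_a_eq {l : List Gen} (h : ∀ t, l ≠ Gen.b :: Gen.a :: t) :
    step Gen.a l = Gen.a :: l := by rw [step_a, strip_eq_self h]

lemma step_length (x : Gen) (l : List Gen) : (step x l).length ≤ l.length + 1 := by
  cases x
  · rw [step_a]; simpa using strip_length l
  · rw [step_b]; simp

lemma norm_nil : norm [] = [] := rfl
lemma norm_cons (x : Gen) (l : List Gen) : norm (x :: l) = step x (norm l) := rfl

lemma norm_length (l : List Gen) : (norm l).length ≤ l.length := by
  induction l with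
  | nil => simp [norm_nil]
  | cons x t ih =>
      rw [norm_cons]
      calc (step x (norm t)).length ≤ (norm t).length + 1 := step_length _ _
        _ ≤ t.length + 1 := by omega
        _ = (x :: t).length := by simp

lemma key2 (w s : List Gen) :
    step Gen.a (List.foldr step s (strip w)) = step Gen.a (List.foldr step s w) := by
  induction w using strip.induct with
  | case1 t ih =>
      rw [strip_ba, ih]
      show step Gen.a (List.foldr step s t)
        = step Gen.a (Gen.b :: Gen.a :: strip (List.foldr step s t))
      rw [step_a, step_a, strip_ba, strip_strip]
  | case2 l h => rw [strip_eq_self (fun t ht => h t ht)]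

lemma key3 (x : Gen) (w s : List Gen) :
    step x (List.foldr step s w) = List.foldr step s (step x w) := by
  cases x
  · show step Gen.a (List.foldr step s w) = step Gen.a (List.foldr step s (strip w))
    rw [key2]
  · rfl

lemma foldr_norm (s u : List Gen) : List.foldr step s (norm u) = List.foldr step s u := by
  induction u with
  | nil => rfl
  | cons x t ih =>
      rw [norm_cons, ← key3, ih]
      rfl

lemma norm_append (u v : List Gen) : norm (u ++ v) = List.foldr step (norm v) u := by
  simpa [norm] using List.foldr_append (f := step) (b := []) (l := u) (l' := v)

lemma norm_norm (u : List Gen) : norm (norm u) = norm u := foldr_norm [] u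

lemma norm_mul {u u' v v' : List Gen} (h1 : norm u = norm u') (h2 : norm v = norm v') :
    norm (u ++ v) = norm (u' ++ v') := by
  rw [norm_append, norm_append, ← foldr_norm _ u, ← foldr_norm _ u', h1, h2]

/-- normal form predicate -/
def N (u : List Gen) : Prop := norm u = u

lemma N_cons {x : Gen} {t : List Gen} (h : N (x :: t)) : N t := by
  unfold N at *
  rw [norm_cons] at h
  cases x
  · rw [step_a] at h
    have h2 : strip (norm t) = t := by injection h
    have l1 : (strip (norm t)).length ≤ (norm t).length := strip_length _
    have l2 : (norm t).length ≤ t.length := norm_length t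
    have l3 : (strip (norm t)).length = t.length := by rw [h2]
    have l4 : (strip (norm t)).length = (norm t).length := by omega
    rw [strip_eq_of_length l4] at h2
    exact h2
  · rw [step_b] at h
    injection h

lemma N_not_aba (t : List Gen) : ¬ N (Gen.a :: Gen.b :: Gen.a :: t) := by
  intro h
  unfold N at h
  rw [norm_cons, norm_cons, norm_cons, step_a, step_b, step_a, strip_ba, strip_strip] at h
  have h2 : strip (norm t) = Gen.b :: Gen.a :: t := by injection h
  exact strip_ne_ba (norm t) t h2


lemma exact_mul (v : List Gen) : ∀ (s : List Gen), N v → N s →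
    (∃ w s', v = w ++ [Gen.a, Gen.b] ∧ s = Gen.a :: s' ∧
      List.foldr step s v = w ++ s) ∨
    (∃ w s', v = w ++ [Gen.a] ∧ s = Gen.b :: Gen.a :: s' ∧
      List.foldr step s v = v ++ s') ∨
    (List.foldr step s v = v ++ s) := by
  induction v with
  | nil => exact fun s _ _ => Or.inr (Or.inr rfl)
  | cons x v' ih =>
    intro s hv hs
    have hv' : N v' := N_cons hv
    have hF : List.foldr step s (x :: v') = step x (List.foldr step s v') := rfl
    rcases ih s hv' hs with ⟨w, s', h1, h2, h3⟩ | ⟨w, s', h1, h2, h3⟩ | h3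
    · -- v' = w ++ [a,b], s = a :: s', F' = w ++ s
      cases x with
      | b =>
        left
        exact ⟨Gen.b :: w, s', by rw [h1]; rfl, h2, by rw [hF, h3, step_b]; rfl⟩
      | a =>
        left
        refine ⟨Gen.a :: w, s', by rw [h1]; rfl, h2, ?_⟩
        rw [hF, h3]
        have hno : ∀ t, w ++ s ≠ Gen.b :: Gen.a :: t := by
          intro t ht
          cases w with
          | nil =>
            rw [h2] at ht
            simp at ht
          | cons c1 w1 =>
            rw [List.cons_append] at ht
            injection ht with e1 e2
            subst e1
            cases w1 with
            | nil =>
              -- v' = [b] ++ [a,b], v = a :: b :: a :: b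
              rw [h1] at hv
              exact N_not_aba [Gen.b] hv
            | cons c2 w2 =>
              rw [List.cons_append] at e2
              injection e2 with e2a e2b
              subst e2a
              rw [h1] at hv
              exact N_not_aba _ hv
        rw [step_a_eq hno]
        rfl
    · -- v' = w ++ [a], s = b :: a :: s', F' = v' ++ s'
      cases x with
      | b =>
        right; left
        exact ⟨Gen.b :: w, s', by rw [h1]; rfl, h2, by rw [hF, h3, step_b]; rfl⟩
      | a =>
        right; left
        refine ⟨Gen.a :: w, s', by rw [h1]; rfl, h2, ?_⟩
        rw [hF, h3]
        have hno : ∀ t, v' ++ s' ≠ Gen.b :: Gen.a :: t := by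
          intro t ht
          cases hvv : v' with
          | nil =>
            rw [hvv] at h1
            simp at h1
          | cons c1 v2 =>
            rw [hvv, List.cons_append] at ht
            injection ht with e1 e2
            subst e1
            cases v2 with
            | nil =>
              -- v' = [b] but v' = w ++ [a]
              rw [hvv] at h1
              rcases w with _ | ⟨cw, w'⟩
              · simp at h1
              · have := congrArg List.length h1
                simp at this
            | cons c2 v3 =>
              rw [List.cons_append] at e2
              injection e2 with e2a e2b
              subst e2a
              rw [hvv] at hv
              exact N_not_aba _ hv
        rw [step_a_eq hno]
        rfl
    · -- F' = v' ++ s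
      cases x with
      | b =>
        right; right
        rw [hF, h3, step_b]
        rfl
      | a =>
        rw [hF, h3]
        match v', hv, h3 with
        | [], hv, h3 =>
          match s, hs with
          | [], hs =>
            right; right; rfl
          | Gen.a :: s1, hs =>
            right; right
            rw [step_a_eq (by intro t ht; simp at ht)]
            rfl
          | [Gen.b], hs =>
            right; right
            rw [step_a_eq (by intro t ht; simp at ht)]
            rfl
          | Gen.b :: Gen.b :: s1, hs =>
            right; right
            rw [step_a_eq (by intro t ht; simp at ht)]
            rfl
          | Gen.b :: Gen.a :: s1, hs =>
            right; left
            refine ⟨[], s1, rfl, rfl, ?_⟩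
            have hs1 : ∀ t, s1 ≠ Gen.b :: Gen.a :: t := by
              intro t ht
              rw [ht] at hs
              exact N_not_aba t (N_cons hs)
            rw [step_a]
            show Gen.a :: strip (Gen.b :: Gen.a :: s1) = [Gen.a] ++ s1
            rw [strip_ba, strip_eq_self hs1]
            rfl
        | [Gen.a], hv, h3 =>
          right; right
          rw [step_a_eq (by intro t ht; simp at ht)]
          rfl
        | [Gen.b], hv, h3 =>
          match s, hs with
          | [], hs =>
            right; right
            rw [step_a_eq (by intro t ht; simp at ht)]
            rfl
          | Gen.b :: s1, hs =>
            right; right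
            rw [step_a_eq (by intro t ht; simp at ht)]
            rfl
          | Gen.a :: s1, hs =>
            left
            refine ⟨[], s1, rfl, rfl, ?_⟩
            have hs1 : ∀ t, s1 ≠ Gen.b :: Gen.a :: t := by
              intro t ht
              rw [ht] at hs
              exact N_not_aba t hs
            rw [step_a]
            show Gen.a :: strip (Gen.b :: Gen.a :: s1) = [] ++ Gen.a :: s1
            rw [strip_ba, strip_eq_self hs1]
            rfl
        | Gen.a :: c2 :: v3, hv, h3 =>
          right; right
          rw [step_a_eq (by intro t ht; simp at ht)]
          rfl
        | Gen.b :: Gen.b :: v3, hv, h3 =>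
          right; right
          rw [step_a_eq (by intro t ht; simp at ht)]
          rfl
        | Gen.b :: Gen.a :: v3, hv, h3 =>
          exact absurd hv (N_not_aba v3)

lemma classify {u : List Gen} (hu : N u) (hid : List.foldr step u u = u) :
    u = [] ∨ u = [Gen.a, Gen.b] ∨ u = [Gen.b, Gen.a] := by
  rcases exact_mul u u hu hu with ⟨w, s', h1, h2, h3⟩ | ⟨w, s', h1, h2, h3⟩ | h3
  · rw [hid] at h3
    have hw : w = [] := by
      have := congrArg List.length h3
      simp at this
      exact this
    subst hw
    right; left
    rw [h1]; rfl
  · rw [hid] at h3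
    have hs : s' = [] := by
      have := congrArg List.length h3
      simp at this
      exact this
    subst hs
    right; right
    exact h2
  · rw [hid] at h3
    left
    have := congrArg List.length h3
    simp at this
    exact this


lemma norm_rel {u v : FreeMonoid Gen} (h : ConGen.Rel abaRel u v) :
    norm (FreeMonoid.toList u) = norm (FreeMonoid.toList v) := by
  induction h with
  | of x y hxy =>
      obtain ⟨hx, hy⟩ := hxy
      subst hx; subst hy
      rfl
  | refl => rfl
  | symm _ ih => exact ih.symm
  | trans _ _ ih1 ih2 => exact ih1.trans ih2
  | mul _ _ ih1 ih2 => exact norm_mul ih1 ih2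

def f : M → List Gen :=
  Quotient.lift (fun w : FreeMonoid Gen => norm (FreeMonoid.toList w))
    (fun _ _ h => norm_rel h)

def mkl (l : List Gen) : M := PresentedMonoid.mk abaRel (FreeMonoid.ofList l)

lemma f_mkl (l : List Gen) : f (mkl l) = norm l := rfl

lemma mkl_append (u v : List Gen) : mkl (u ++ v) = mkl u * mkl v := by
  unfold mkl
  rw [FreeMonoid.ofList_append, map_mul]

lemma mkl_aba : mkl [Gen.a, Gen.b, Gen.a] = mkl [Gen.a] :=
  Quotient.sound (ConGen.Rel.of _ _ ⟨rfl, rfl⟩)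

lemma mkl_stripped (t : List Gen) : mkl (Gen.a :: strip t) = mkl (Gen.a :: t) := by
  induction t using strip.induct with
  | case1 t ih =>
      rw [strip_ba, ih]
      have h0 : (Gen.a :: Gen.b :: Gen.a :: t) = [Gen.a, Gen.b, Gen.a] ++ t := rfl
      have h1 : (Gen.a :: t) = [Gen.a] ++ t := rfl
      rw [h0, h1, mkl_append, mkl_append, mkl_aba]
  | case2 l h => rw [strip_eq_self (fun t ht => h t ht)]

lemma mkl_step (x : Gen) (t : List Gen) : mkl (step x t) = mkl (x :: t) := by
  cases x
  · rw [step_a]; exact mkl_stripped t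
  · rfl

lemma mkl_norm (l : List Gen) : mkl (norm l) = mkl l := by
  induction l with
  | nil => rfl
  | cons x t ih =>
      rw [norm_cons, mkl_step]
      show mkl ([x] ++ norm t) = mkl ([x] ++ t)
      rw [mkl_append, mkl_append, ih]

lemma one_eq : (1 : M) = mkl [] := rfl
lemma ab_eq : a * b = mkl [Gen.a, Gen.b] := rfl
lemma ba_eq : b * a = mkl [Gen.b, Gen.a] := rfl

end Aba

open Aba in
theorem idempotents_of_aba_monoid :
    (∀ x : M, x * x = x ↔ x = 1 ∨ x = a * b ∨ x = b * a) ∧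
    (1 : M) ≠ a * b ∧ (1 : M) ≠ b * a ∧ a * b ≠ b * a := by
  refine ⟨?_, ?_, ?_, ?_⟩
  · intro x
    constructor
    · intro hx
      obtain ⟨w, rfl⟩ := PresentedMonoid.surjective_mk (rels := abaRel) x
      set l : List Gen := FreeMonoid.toList w with hl
      have hxl : PresentedMonoid.mk abaRel w = mkl l := rfl
      have h1 : norm (l ++ l) = norm l := congrArg f hx
      have h2 : List.foldr step (norm l) (norm l) = norm l := by
        rw [foldr_norm, ← norm_append]
        exact h1
      rcases classify (norm_norm l) h2 with h | h | h
      · left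
        rw [hxl, ← mkl_norm, h, one_eq]
      · right; left
        rw [hxl, ← mkl_norm, h, ab_eq]
      · right; right
        rw [hxl, ← mkl_norm, h, ba_eq]
    · rintro (rfl | rfl | rfl)
      · rw [one_mul]
      · rw [ab_eq, ← mkl_append]
        show mkl ([Gen.a, Gen.b, Gen.a] ++ [Gen.b]) = mkl [Gen.a, Gen.b]
        rw [mkl_append, mkl_aba, ← mkl_append]
        rfl
      · rw [ba_eq, ← mkl_append]
        show mkl ([Gen.b] ++ [Gen.a, Gen.b, Gen.a]) = mkl [Gen.b, Gen.a]
        rw [mkl_append, mkl_aba, ← mkl_append]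
        rfl
  · intro h
    have h2 : ([] : List Gen) = [Gen.a, Gen.b] := congrArg f h
    exact nomatch h2
  · intro h
    have h2 : ([] : List Gen) = [Gen.b, Gen.a] := congrArg f h
    exact nomatch h2
  · intro h
    have h2 : ([Gen.a, Gen.b] : List Gen) = [Gen.b, Gen.a] := congrArg f h
    have h3 : Gen.a = Gen.b := by injection h2
    exact Gen.noConfusion h3
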